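/- Let 0 < q < 1, p > 1, and α > 0. For every nonnegative function f on (0,∞), the series inequality (1-q)^{p+1} Γ_q(α)^{-p} ∑_{j∈ℤ} q^{j(1-p)} (∑_{i=j}^∞ (q^{i-j+1};q)_{α-1} f(q^i) q^i)^p ≤ (Γ_q(1-1/p)/Γ_q(α+1-1/p))^p (1-q) ∑_{i∈ℤ} q^i f(q^i)^p holds; equivalently ∫_0^∞ (x^{-α} I_q^α f(x))^p d_q x ≤ (Γ_q(1-1/p)/Γ_q(α+1-1/p))^p ∫_0^∞ f^p d_q t. -/

import Mathlib

open scoped ENNReal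
open Finset Filter Topology MeasureTheory

set_option maxHeartbeats 1600000

/-- The infinite q-Pochhammer symbol `(a; q)_∞ = ∏_{i≥0} (1 - a qⁱ)`. -/
noncomputable def qPochInf (a q : ℝ) : ℝ := ∏' i : ℕ, (1 - a * q ^ i)

/-- The q-Pochhammer symbol `(a; q)_β = (a;q)_∞ / (a q^β; q)_∞`. -/
noncomputable def qPoch (a q β : ℝ) : ℝ := qPochInf a q / qPochInf (a * q ^ β) q

/-- The q-gamma function `Γ_q(x) = (q;q)_∞ (1-q)^{1-x} / (q^x; q)_∞`. -/
noncomputable def qGamma (q x : ℝ) : ℝ :=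
  qPochInf q q * (1 - q) ^ (1 - x) / qPochInf (q ^ x) q

section lemmas


section basic
variable {q b : ℝ} (hq : 0 < q) (hq1 : q < 1) (hb0 : 0 ≤ b) (hb1 : b < 1)

include hq hq1 hb0 hb1

lemma factor_pos (i : ℕ) : 0 < 1 - b * q ^ i := by
  have h1 : b * q ^ i < 1 := by
    calc b * q ^ i ≤ b * 1 := by
          gcongr
          · exact pow_le_one₀ hq.le hq1.le
    _ < 1 := by linarith
  linarith

lemma factor_le_one (i : ℕ) : 1 - b * q ^ i ≤ 1 := by
  nlinarith [pow_nonneg hq.le i]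

lemma prod_lower (s : Finset ℕ) :
    Real.exp (-(b / ((1 - b) * (1 - q)))) ≤ ∏ i ∈ s, (1 - b * q ^ i) := by
  have key : ∀ i : ℕ, Real.exp (-(b * q ^ i / (1 - b))) ≤ 1 - b * q ^ i := by
    intro i
    have hfp := factor_pos hq hq1 hb0 hb1 i
    have h1b : (0:ℝ) < 1 - b := by linarith
    have h := Real.add_one_le_exp (b * q ^ i / (1 - b))
    have hbq : 0 ≤ b * q ^ i := by positivity
    rw [Real.exp_neg, ← one_div]
    rw [div_le_iff₀ (by positivity)]
    have h2 : (1 - b * q ^ i) * (1 + b * q ^ i / (1 - b)) ≥ 1 := by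
      have hle : b * q ^ i ≤ b := by
        calc b * q ^ i ≤ b * 1 := by gcongr; exact pow_le_one₀ hq.le hq1.le
        _ = b := mul_one b
      rw [ge_iff_le, ← sub_nonneg]
      have expand : (1 - b * q ^ i) * (1 + b * q ^ i / (1 - b)) - 1
          = (b * q ^ i) * ((b - b * q ^ i) / (1 - b)) := by
        field_simp; ring
      rw [expand]
      have hnn : 0 ≤ (b - b * q ^ i) / (1 - b) := div_nonneg (by linarith) (by linarith)
      positivity
    nlinarith [Real.exp_pos (b * q ^ i / (1 - b)), h2,
      mul_le_mul_of_nonneg_left h (le_of_lt hfp)]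
  calc Real.exp (-(b / ((1 - b) * (1 - q))))
      ≤ Real.exp (-(∑ i ∈ s, b * q ^ i / (1 - b))) := by
        apply Real.exp_le_exp.2
        rw [neg_le_neg_iff]
        have h1b : (0:ℝ) < 1 - b := by linarith
        have h1q : (0:ℝ) < 1 - q := by linarith
        have hsum : ∑ i ∈ s, b * q ^ i / (1 - b) ≤ b / ((1-b)*(1-q)) := by
          have : ∑ i ∈ s, b * q ^ i / (1 - b) = (b / (1-b)) * ∑ i ∈ s, q ^ i := by
            rw [mul_sum]; congr 1; ext i; ring
          rw [this]
          have hgeo : ∑ i ∈ s, q ^ i ≤ 1 / (1 - q) := by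
            classical
            obtain ⟨n, hn⟩ := s.exists_nat_subset_range
            calc ∑ i ∈ s, q ^ i ≤ ∑ i ∈ range n, q ^ i :=
                  Finset.sum_le_sum_of_subset_of_nonneg hn (fun i _ _ => by positivity)
            _ ≤ 1 / (1 - q) := by
                  rw [geom_sum_eq (by intro h; rw [h] at hq1; linarith)]
                  have heq : (q ^ n - 1) / (q - 1) = (1 - q ^ n) / (1 - q) := by
                    rw [← neg_div_neg_eq]; ring_nf
                  rw [heq, div_le_div_iff₀ (by linarith) (by linarith)]
                  nlinarith [pow_nonneg hq.le n]
          calc (b/(1-b)) * ∑ i ∈ s, q ^ i ≤ (b/(1-b)) * (1/(1-q)) := by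
                gcongr
          _ = b / ((1-b)*(1-q)) := by field_simp
        exact hsum
  _ ≤ ∏ i ∈ s, (1 - b * q ^ i) := by
        calc Real.exp (-∑ i ∈ s, b * q ^ i / (1 - b))
            = ∏ i ∈ s, Real.exp (-(b * q ^ i / (1 - b))) := by
              rw [← Real.exp_sum]
              congr 1
              rw [← Finset.sum_neg_distrib]
        _ ≤ ∏ i ∈ s, (1 - b * q ^ i) :=
            Finset.prod_le_prod (fun i _ => (Real.exp_pos _).le) (fun i _ => key i)

lemma hasProd_qPochInf : HasProd (fun i : ℕ => 1 - b * q ^ i) (qPochInf b q) := by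
  have hanti : Antitone (fun s : Finset ℕ => ∏ i ∈ s, (1 - b * q ^ i)) := by
    intro s t hst
    calc ∏ i ∈ t, (1 - b * q ^ i)
        = (∏ i ∈ s, (1 - b * q ^ i)) * ∏ i ∈ t \ s, (1 - b * q ^ i) := by
          rw [← Finset.prod_union (Finset.disjoint_sdiff)]
          congr 1
          exact (Finset.union_sdiff_of_subset hst).symm
    _ ≤ (∏ i ∈ s, (1 - b * q ^ i)) * 1 := by
          gcongr
          · exact Finset.prod_nonneg fun i _ => (factor_pos hq hq1 hb0 hb1 i).le
          · exact Finset.prod_le_one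
              (fun i _ => (factor_pos hq hq1 hb0 hb1 i).le)
              (fun i _ => factor_le_one hq hq1 hb0 hb1 i)
    _ = _ := mul_one _
  have hbdd : BddBelow (Set.range fun s : Finset ℕ => ∏ i ∈ s, (1 - b * q ^ i)) := by
    refine ⟨Real.exp (-(b / ((1 - b) * (1 - q)))), ?_⟩
    rintro x ⟨s, rfl⟩
    exact prod_lower hq hq1 hb0 hb1 s
  have := tendsto_atTop_ciInf hanti hbdd
  have hp : HasProd (fun i : ℕ => 1 - b * q ^ i)
      (⨅ s : Finset ℕ, ∏ i ∈ s, (1 - b * q ^ i)) := this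
  exact hp.multipliable.hasProd

lemma multipliable_qPochInf : Multipliable (fun i : ℕ => 1 - b * q ^ i) :=
  (hasProd_qPochInf hq hq1 hb0 hb1).multipliable

lemma qPochInf_pos : 0 < qPochInf b q := by
  have hp := hasProd_qPochInf hq hq1 hb0 hb1
  have := ge_of_tendsto' (hp.tendsto_prod_nat) (fun n => prod_lower hq hq1 hb0 hb1 (range n))
  calc (0:ℝ) < Real.exp (-(b / ((1 - b) * (1 - q)))) := Real.exp_pos _
  _ ≤ qPochInf b q := this

lemma qPochInf_le_one : qPochInf b q ≤ 1 := by
  have hp := hasProd_qPochInf hq hq1 hb0 hb1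
  refine le_of_tendsto' (hp.tendsto_prod_nat) (fun n => ?_)
  exact Finset.prod_le_one (fun i _ => (factor_pos hq hq1 hb0 hb1 i).le)
    (fun i _ => factor_le_one hq hq1 hb0 hb1 i)

lemma qPochInf_split (m : ℕ) :
    qPochInf b q = (∏ i ∈ range m, (1 - b * q ^ i)) * qPochInf (b * q ^ m) q := by
  induction m with
  | zero => simp
  | succ n ih =>
    have hb' : 0 ≤ b * q ^ n := by positivity
    have hb1' : b * q ^ n < 1 := by
      calc b * q ^ n ≤ b * 1 := by gcongr; exact pow_le_one₀ hq.le hq1.le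
      _ < 1 := by linarith
    have step : qPochInf (b * q ^ n) q
        = (1 - b * q ^ n) * qPochInf (b * q ^ (n+1)) q := by
      have hmul : Multipliable (fun i : ℕ => 1 - (b * q ^ (n+1)) * q ^ i) :=
        multipliable_qPochInf hq hq1 (by positivity)
          (by calc b * q ^ (n+1) ≤ b * 1 := by gcongr; exact pow_le_one₀ hq.le hq1.le
              _ < 1 := by linarith)
      have h := Multipliable.prod_mul_tprod_nat_mul' (f := fun i => 1 - (b * q ^ n) * q ^ i) (k := 1) ?_
      · rw [qPochInf, ← h]
        simp only [Finset.prod_range_one, pow_zero, mul_one]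
        congr 1
        · unfold qPochInf
          apply tprod_congr
          intro i
          ring_nf
      · convert hmul using 2 with i
        ring
    rw [Finset.prod_range_succ, ih, step]
    ring

end basic

lemma partial_le_qPochInf {q b : ℝ} (hq : 0 < q) (hq1 : q < 1) (hb0 : 0 ≤ b) (hb1 : b < 1)
    (m : ℕ) : qPochInf b q ≤ ∏ i ∈ range m, (1 - b * q ^ i) := by
  rw [qPochInf_split hq hq1 hb0 hb1 m]
  have hb' : 0 ≤ b * q ^ m := by positivity
  have hb1' : b * q ^ m < 1 := by
    calc b * q ^ m ≤ b * 1 := by gcongr; exact pow_le_one₀ hq.le hq1.le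
    _ < 1 := by linarith
  calc (∏ i ∈ range m, (1 - b * q ^ i)) * qPochInf (b * q ^ m) q
      ≤ (∏ i ∈ range m, (1 - b * q ^ i)) * 1 := by
        gcongr
        · exact Finset.prod_nonneg fun i _ => (factor_pos hq hq1 hb0 hb1 i).le
        · exact qPochInf_le_one hq hq1 hb' hb1'
  _ = _ := mul_one _

/-- Coefficients of the q-binomial series. -/
noncomputable def qbc (q A : ℝ) (m : ℕ) : ℝ :=
  (∏ i ∈ range m, (1 - A * q ^ i)) / (∏ i ∈ range m, (1 - q * q ^ i))

section qbin
variable {q A : ℝ} (hq : 0 < q) (hq1 : q < 1) (hA0 : 0 ≤ A) (hA1 : A < 1)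
include hq hq1 hA0 hA1

lemma qbc_nonneg (m : ℕ) : 0 ≤ qbc q A m :=
  div_nonneg (Finset.prod_nonneg fun i _ => (factor_pos hq hq1 hA0 hA1 i).le)
    (Finset.prod_nonneg fun i _ => (factor_pos hq hq1 hq.le hq1 i).le)

lemma qbc_le (m : ℕ) : qbc q A m ≤ 1 / qPochInf q q := by
  have hP := qPochInf_pos hq hq1 hq.le hq1
  have hd := partial_le_qPochInf hq hq1 hq.le hq1 m
  have hdpos : 0 < ∏ i ∈ range m, (1 - q * q ^ i) :=
    Finset.prod_pos fun i _ => factor_pos hq hq1 hq.le hq1 i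
  have hnum : ∏ i ∈ range m, (1 - A * q ^ i) ≤ 1 :=
    Finset.prod_le_one (fun i _ => (factor_pos hq hq1 hA0 hA1 i).le)
      (fun i _ => factor_le_one hq hq1 hA0 hA1 i)
  rw [qbc, div_le_div_iff₀ hdpos hP]
  calc (∏ i ∈ range m, (1 - A * q ^ i)) * qPochInf q q ≤ 1 * (∏ i ∈ range m, (1 - q * q ^ i)) := by
        apply mul_le_mul hnum hd hP.le (by norm_num)
  _ = _ := by ring

lemma qbc_rec (m : ℕ) :
    (1 - q * q ^ m) * qbc q A (m + 1) = (1 - A * q ^ m) * qbc q A m := by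
  have hdpos : ∀ n : ℕ, (0:ℝ) < ∏ i ∈ range n, (1 - q * q ^ i) :=
    fun n => Finset.prod_pos fun i _ => factor_pos hq hq1 hq.le hq1 i
  have hne : (1 - q * q ^ m) ≠ 0 := (factor_pos hq hq1 hq.le hq1 m).ne'
  have hne2 : (∏ i ∈ range m, (1 - q * q ^ i)) ≠ 0 := (hdpos m).ne'
  rw [qbc, qbc, Finset.prod_range_succ, Finset.prod_range_succ]
  field_simp

lemma qbc_summable {z : ℝ} (hz0 : 0 ≤ z) (hz1 : z < 1) :
    Summable (fun m => qbc q A m * z ^ m) := by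
  have hP := qPochInf_pos hq hq1 hq.le hq1
  apply Summable.of_nonneg_of_le
    (fun m => mul_nonneg (qbc_nonneg hq hq1 hA0 hA1 m) (pow_nonneg hz0 m))
    (fun m => ?_) ((summable_geometric_of_lt_one hz0 hz1).mul_left (1 / qPochInf q q))
  exact mul_le_mul_of_nonneg_right (qbc_le hq hq1 hA0 hA1 m) (pow_nonneg hz0 m)

set_option maxHeartbeats 1000000 in
lemma qbc_FE {z : ℝ} (hz0 : 0 ≤ z) (hz1 : z < 1) :
    (1 - z) * ∑' m, qbc q A m * z ^ m
      = (1 - A * z) * ∑' m, qbc q A m * (q * z) ^ m := by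
  have hqz0 : 0 ≤ q * z := by positivity
  have hqz1 : q * z < 1 := lt_of_le_of_lt (mul_le_of_le_one_left hz0 hq1.le) hz1
  have hs1 := qbc_summable hq hq1 hA0 hA1 hz0 hz1
  have hs2 := qbc_summable hq hq1 hA0 hA1 hqz0 hqz1
  have hs1' : Summable (fun m => qbc q A (m+1) * z ^ (m+1)) :=
    (summable_nat_add_iff 1).2 hs1
  have hs2' : Summable (fun m => qbc q A (m+1) * (q*z) ^ (m+1)) :=
    (summable_nat_add_iff 1).2 hs2
  have h0 : qbc q A 0 = 1 := by simp [qbc]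
  have e1 : ∑' m, qbc q A m * z ^ m = 1 + ∑' m, qbc q A (m+1) * z ^ (m+1) := by
    rw [Summable.tsum_eq_zero_add hs1, h0]; norm_num
  have e2 : ∑' m, qbc q A m * (q*z) ^ m = 1 + ∑' m, qbc q A (m+1) * (q*z) ^ (m+1) := by
    rw [Summable.tsum_eq_zero_add hs2, h0]; norm_num
  have e3 : z * ∑' m, qbc q A m * z ^ m = ∑' m, qbc q A m * z ^ (m+1) := by
    rw [← tsum_mul_left]; apply tsum_congr; intro m; ring
  have e4 : (A * z) * ∑' m, qbc q A m * (q*z) ^ m = ∑' m, (A * z) * (qbc q A m * (q*z) ^ m) := by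
    rw [← tsum_mul_left]
  have key : ∑' m, (qbc q A (m+1) * z ^ (m+1) - qbc q A m * z ^ (m+1))
      = ∑' m, (qbc q A (m+1) * (q*z) ^ (m+1) - (A * z) * (qbc q A m * (q*z) ^ m)) := by
    apply tsum_congr
    intro m
    have hr := qbc_rec hq hq1 hA0 hA1 m
    linear_combination z ^ (m+1) * hr
  have sub1 : ∑' m, (qbc q A (m+1) * z ^ (m+1) - qbc q A m * z ^ (m+1))
      = (∑' m, qbc q A (m+1) * z ^ (m+1)) - ∑' m, qbc q A m * z ^ (m+1) :=
    Summable.tsum_sub hs1' ((hs1.mul_left z).congr (fun m => by simp [pow_succ]; ring))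
  have sub2 : ∑' m, (qbc q A (m+1) * (q*z) ^ (m+1) - (A * z) * (qbc q A m * (q*z) ^ m))
      = (∑' m, qbc q A (m+1) * (q*z) ^ (m+1)) - ∑' m, (A * z) * (qbc q A m * (q*z) ^ m) :=
    Summable.tsum_sub hs2' (hs2.mul_left (A * z))
  have lhs_eq : (1 - z) * ∑' m, qbc q A m * z ^ m
      = 1 + ((∑' m, qbc q A (m+1) * z ^ (m+1)) - ∑' m, qbc q A m * z ^ (m+1)) := by
    rw [sub_mul, one_mul, e3]
    nth_rewrite 1 [e1]
    ring
  have rhs_eq : (1 - A * z) * ∑' m, qbc q A m * (q*z) ^ m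
      = 1 + ((∑' m, qbc q A (m+1) * (q*z) ^ (m+1)) - ∑' m, (A * z) * (qbc q A m * (q*z) ^ m)) := by
    rw [sub_mul, one_mul, e4]
    nth_rewrite 1 [e2]
    ring
  rw [lhs_eq, rhs_eq, ← sub1, ← sub2, key]

lemma qbc_iterate {Z : ℝ} (hZ0 : 0 ≤ Z) (hZ1 : Z < 1) (n : ℕ) :
    (∏ i ∈ range n, (1 - Z * q ^ i)) * ∑' m, qbc q A m * Z ^ m
      = (∏ i ∈ range n, (1 - A * Z * q ^ i)) * ∑' m, qbc q A m * (q ^ n * Z) ^ m := by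
  induction n with
  | zero => simp
  | succ n ih =>
    have hz0 : 0 ≤ q ^ n * Z := by positivity
    have hz1 : q ^ n * Z < 1 := by
      calc q ^ n * Z ≤ 1 * Z :=
            mul_le_mul_of_nonneg_right (pow_le_one₀ hq.le hq1.le) hZ0
      _ < 1 := by linarith
    have hFE := qbc_FE hq hq1 hA0 hA1 hz0 hz1
    have harg : q * (q ^ n * Z) = q ^ (n+1) * Z := by ring
    rw [harg] at hFE
    rw [Finset.prod_range_succ, Finset.prod_range_succ]
    linear_combination (1 - Z * q ^ n) * ih
      + (∏ i ∈ range n, (1 - A * Z * q ^ i)) * hFE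

lemma qbc_tsum_ge_one {w : ℝ} (hw0 : 0 ≤ w) (hw1 : w < 1) :
    1 ≤ ∑' m, qbc q A m * w ^ m := by
  have hs := qbc_summable hq hq1 hA0 hA1 hw0 hw1
  have h := Summable.le_tsum hs 0 (fun j _ => mul_nonneg (qbc_nonneg hq hq1 hA0 hA1 j) (pow_nonneg hw0 j))
  have h0 : qbc q A 0 * w ^ 0 = 1 := by simp [qbc]
  rwa [h0] at h

lemma qbc_tsum_le {Z w : ℝ} (hZ1 : Z < 1) (hw0 : 0 ≤ w) (hwZ : w ≤ Z) :
    ∑' m, qbc q A m * w ^ m ≤ 1 + 1 / (qPochInf q q * (1 - Z)) * w := by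
  have hZ0 : 0 ≤ Z := le_trans hw0 hwZ
  have hw1 : w < 1 := lt_of_le_of_lt hwZ hZ1
  have hs := qbc_summable hq hq1 hA0 hA1 hw0 hw1
  have hP := qPochInf_pos hq hq1 hq.le hq1
  rw [Summable.tsum_eq_zero_add hs]
  have h0 : qbc q A 0 * w ^ 0 = 1 := by simp [qbc]
  rw [h0]
  have hterm : ∀ m : ℕ, qbc q A (m+1) * w ^ (m+1) ≤ (1 / qPochInf q q * w) * Z ^ m := by
    intro m
    have h1 : qbc q A (m+1) ≤ 1 / qPochInf q q := qbc_le hq hq1 hA0 hA1 (m+1)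
    have h2 : w ^ (m+1) ≤ w * Z ^ m := by
      rw [pow_succ']
      exact mul_le_mul_of_nonneg_left (pow_le_pow_left₀ hw0 hwZ m) hw0
    calc qbc q A (m+1) * w ^ (m+1) ≤ (1 / qPochInf q q) * (w * Z ^ m) :=
          mul_le_mul h1 h2 (pow_nonneg hw0 (m+1)) (by positivity)
    _ = (1 / qPochInf q q * w) * Z ^ m := by ring
  have hsum : ∑' m, qbc q A (m+1) * w ^ (m+1) ≤ ∑' m : ℕ, (1 / qPochInf q q * w) * Z ^ m :=
    Summable.tsum_le_tsum hterm ((summable_nat_add_iff 1).2 hs)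
      ((summable_geometric_of_lt_one hZ0 hZ1).mul_left _)
  have hgeo : ∑' m : ℕ, (1 / qPochInf q q * w) * Z ^ m
      = (1 / qPochInf q q * w) * (1 - Z)⁻¹ := by
    rw [tsum_mul_left, tsum_geometric_of_lt_one hZ0 hZ1]
  have hrw : 1 / (qPochInf q q * (1 - Z)) * w = (1 / qPochInf q q * w) * (1 - Z)⁻¹ := by
    field_simp
  rw [hrw]
  rw [hgeo] at hsum
  linarith

lemma qbinomial {Z : ℝ} (hZ0 : 0 ≤ Z) (hZ1 : Z < 1) :
    ∑' m, qbc q A m * Z ^ m = qPochInf (A * Z) q / qPochInf Z q := by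
  have hAZ0 : 0 ≤ A * Z := mul_nonneg hA0 hZ0
  have hAZ1 : A * Z < 1 :=
    lt_of_le_of_lt (mul_le_of_le_one_left hZ0 hA1.le) hZ1
  have hPZ := qPochInf_pos hq hq1 hZ0 hZ1
  have t1 : Tendsto (fun n => (∏ i ∈ range n, (1 - Z * q ^ i)) * ∑' m, qbc q A m * Z ^ m)
      atTop (𝓝 (qPochInf Z q * ∑' m, qbc q A m * Z ^ m)) :=
    ((hasProd_qPochInf hq hq1 hZ0 hZ1).tendsto_prod_nat).mul_const _
  have hFlim : Tendsto (fun n => ∑' m, qbc q A m * (q ^ n * Z) ^ m) atTop (𝓝 1) := by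
    have hup : Tendsto (fun n : ℕ => 1 + 1 / (qPochInf q q * (1 - Z)) * (q ^ n * Z))
        atTop (𝓝 1) := by
      have h1 : Tendsto (fun n : ℕ => q ^ n) atTop (𝓝 0) :=
        tendsto_pow_atTop_nhds_zero_of_lt_one hq.le hq1
      have := ((h1.mul_const Z).const_mul (1 / (qPochInf q q * (1 - Z)))).const_add 1
      simpa using this
    apply tendsto_of_tendsto_of_tendsto_of_le_of_le tendsto_const_nhds hup
    · intro n
      exact qbc_tsum_ge_one hq hq1 hA0 hA1 (by positivity)
        (lt_of_le_of_lt (mul_le_of_le_one_left hZ0 (pow_le_one₀ hq.le hq1.le)) hZ1)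
    · intro n
      exact qbc_tsum_le hq hq1 hA0 hA1 hZ1 (by positivity)
        (mul_le_of_le_one_left hZ0 (pow_le_one₀ hq.le hq1.le))
  have t2 : Tendsto (fun n => (∏ i ∈ range n, (1 - A * Z * q ^ i)) *
      ∑' m, qbc q A m * (q ^ n * Z) ^ m) atTop (𝓝 (qPochInf (A * Z) q * 1)) :=
    ((hasProd_qPochInf hq hq1 hAZ0 hAZ1).tendsto_prod_nat).mul hFlim
  have heq : (fun n => (∏ i ∈ range n, (1 - Z * q ^ i)) * ∑' m, qbc q A m * Z ^ m)
      = (fun n => (∏ i ∈ range n, (1 - A * Z * q ^ i)) * ∑' m, qbc q A m * (q ^ n * Z) ^ m) :=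
    funext fun n => qbc_iterate hq hq1 hA0 hA1 hZ0 hZ1 n
  rw [heq] at t1
  have := tendsto_nhds_unique t1 t2
  rw [mul_one] at this
  field_simp
  linarith [this]

end qbin


lemma tsum_holder {p q : ℝ} (hpq : p.HolderConjugate q) (f g : ℕ → ENNReal) :
    ∑' n, f n * g n ≤ (∑' n, f n ^ p) ^ (1/p) * (∑' n, g n ^ q) ^ (1/q) := by
  have h := ENNReal.lintegral_mul_le_Lp_mul_Lq (MeasureTheory.Measure.count (α := ℕ)) hpq
    (f := f) (g := g) (measurable_from_top).aemeasurable (measurable_from_top).aemeasurable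
  simpa [MeasureTheory.lintegral_count] using h

lemma young_conv {p : ℝ} (hp : 1 < p) (a : ℕ → ENNReal) (u : ℤ → ENNReal) :
    ∑' j : ℤ, (∑' m : ℕ, a m * u (j + (m : ℤ))) ^ p
      ≤ (∑' m, a m) ^ p * ∑' i : ℤ, u i ^ p := by
  set p' := p / (p - 1) with hp'
  have hpq : p'.HolderConjugate p := (Real.HolderConjugate.conjExponent hp).symm
  have hp0 : (0:ℝ) < p := by linarith
  have hstep : ∀ j : ℤ, (∑' m : ℕ, a m * u (j + (m:ℤ))) ^ p
      ≤ (∑' m, a m) ^ (p - 1) * ∑' m : ℕ, a m * u (j + (m:ℤ)) ^ p := by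
    intro j
    have hsplit : (fun m : ℕ => a m * u (j + (m:ℤ)))
        = fun m : ℕ => (a m ^ (1/p')) * (a m ^ (1/p) * u (j + (m:ℤ))) := by
      funext m
      rw [← mul_assoc, ← ENNReal.rpow_add_of_nonneg (1/p') (1/p)
        hpq.one_div_nonneg hpq.symm.one_div_nonneg, one_div, one_div,
        hpq.inv_add_inv_eq_one, ENNReal.rpow_one]
    have hH := tsum_holder hpq (fun m => a m ^ (1/p')) (fun m => a m ^ (1/p) * u (j + (m:ℤ)))
    rw [← hsplit] at hH
    have e1 : ∀ m : ℕ, (a m ^ (1/p')) ^ p' = a m := by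
      intro m
      rw [← ENNReal.rpow_mul, one_div, inv_mul_cancel₀ hpq.ne_zero, ENNReal.rpow_one]
    have e2 : ∀ m : ℕ, (a m ^ (1/p) * u (j + (m:ℤ))) ^ p = a m * u (j + (m:ℤ)) ^ p := by
      intro m
      rw [ENNReal.mul_rpow_of_nonneg _ _ hp0.le, ← ENNReal.rpow_mul, one_div,
        inv_mul_cancel₀ hp0.ne', ENNReal.rpow_one]
    simp only [e1, e2] at hH
    calc (∑' m : ℕ, a m * u (j + (m:ℤ))) ^ p
        ≤ ((∑' m, a m) ^ (1/p') * (∑' m : ℕ, a m * u (j + (m:ℤ)) ^ p) ^ (1/p)) ^ p :=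
          ENNReal.rpow_le_rpow hH hp0.le
    _ = (∑' m, a m) ^ (p - 1) * ∑' m : ℕ, a m * u (j + (m:ℤ)) ^ p := by
        rw [ENNReal.mul_rpow_of_nonneg _ _ hp0.le, ← ENNReal.rpow_mul, ← ENNReal.rpow_mul]
        congr 1
        · congr 1
          rw [hp']
          field_simp
        · rw [one_div, inv_mul_cancel₀ hp0.ne', ENNReal.rpow_one]
  calc ∑' j : ℤ, (∑' m : ℕ, a m * u (j + (m:ℤ))) ^ p
      ≤ ∑' j : ℤ, (∑' m, a m) ^ (p - 1) * ∑' m : ℕ, a m * u (j + (m:ℤ)) ^ p :=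
        ENNReal.tsum_le_tsum hstep
  _ = (∑' m, a m) ^ (p - 1) * ∑' j : ℤ, ∑' m : ℕ, a m * u (j + (m:ℤ)) ^ p :=
        ENNReal.tsum_mul_left
  _ = (∑' m, a m) ^ (p - 1) * ∑' m : ℕ, ∑' j : ℤ, a m * u (j + (m:ℤ)) ^ p := by
        rw [ENNReal.tsum_comm]
  _ = (∑' m, a m) ^ (p - 1) * ∑' m : ℕ, a m * ∑' j : ℤ, u (j + (m:ℤ)) ^ p := by
        congr 1
        exact tsum_congr fun m => ENNReal.tsum_mul_left
  _ = (∑' m, a m) ^ (p - 1) * ((∑' m : ℕ, a m) * ∑' i : ℤ, u i ^ p) := by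
        congr 1
        rw [← ENNReal.tsum_mul_right]
        exact tsum_congr fun m => by
          congr 1
          exact (Equiv.addRight (m:ℤ)).tsum_eq (fun i => u i ^ p)
  _ = (∑' m, a m) ^ p * ∑' i : ℤ, u i ^ p := by
        rw [← mul_assoc]
        congr 1
        nth_rewrite 2 [← ENNReal.rpow_one (∑' m, a m)]
        rw [← ENNReal.rpow_add_of_nonneg (p-1) 1 (by linarith) zero_le_one]
        norm_num

-- constant identity
lemma const_identity (q p α : ℝ) (hq : 0 < q) (hq1 : q < 1) (hp : 1 < p) (hα : 0 < α)
    (Pq PA PZ PAZ : ℝ) (hPq : 0 < Pq) (hPA : 0 < PA) (hPZ : 0 < PZ) (hPAZ : 0 < PAZ)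
    (hGα : qGamma q α = Pq * (1-q) ^ (1-α) / PA)
    (hGs : qGamma q (1 - 1/p) = Pq * (1-q) ^ (1-(1-1/p)) / PZ)
    (hGas : qGamma q (α + 1 - 1/p) = Pq * (1-q) ^ (1-(α+1-1/p)) / PAZ) :
    (1 - q) ^ (p + 1) / (qGamma q α) ^ p * ((Pq / PA) * (PAZ / PZ)) ^ p
      = (qGamma q (1 - 1/p) / qGamma q (α + 1 - 1/p)) ^ p * (1 - q) := by
  have hG : (0:ℝ) < 1 - q := by linarith
  set X := PAZ / PZ with hX
  have hX0 : 0 < X := by positivity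
  have hB0 : 0 < (Pq / PA) * X := by positivity
  have hGα0 : 0 < qGamma q α := by rw [hGα]; positivity
  have e1 : qGamma q (1 - 1/p) / qGamma q (α + 1 - 1/p) = X * (1-q) ^ α := by
    rw [hGs, hGas]
    have hrel : (1-q) ^ (1-(1-1/p)) = (1-q) ^ (1-(α+1-1/p)) * (1-q) ^ α := by
      rw [← Real.rpow_add hG]; ring_nf
    rw [hrel]
    have h1 : ((1:ℝ)-q) ^ (1-(α+1-1/p)) ≠ 0 := by positivity
    field_simp [hPq.ne', hPZ.ne', hPAZ.ne']
    rw [hX]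
    field_simp
  have e3 : (Pq / PA) * X / qGamma q α = X * (1-q) ^ (α - 1) := by
    rw [hGα]
    have hrel : ((1:ℝ)-q) ^ (1-α) * (1-q) ^ (α-1) = 1 := by
      rw [← Real.rpow_add hG]; norm_num
    have h1 : ((1:ℝ)-q) ^ (1-α) ≠ 0 := by positivity
    have step : Pq / PA * X / (Pq * (1-q) ^ (1-α) / PA) = X / (1-q) ^ (1-α) := by
      field_simp [hPq.ne', hPA.ne']
    rw [step, div_eq_iff h1, mul_assoc, mul_comm ((1-q) ^ (α-1)), hrel, mul_one]
  calc (1 - q) ^ (p + 1) / (qGamma q α) ^ p * ((Pq / PA) * X) ^ p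
      = ((Pq / PA) * X / qGamma q α) ^ p * (1-q) ^ (p+1) := by
        rw [Real.div_rpow hB0.le hGα0.le]; ring
  _ = (X * (1-q) ^ (α - 1)) ^ p * (1-q) ^ (p+1) := by rw [e3]
  _ = X ^ p * ((1-q) ^ ((α-1)*p) * (1-q) ^ (p+1)) := by
        rw [Real.mul_rpow hX0.le (by positivity), Real.rpow_mul hG.le]; ring
  _ = X ^ p * (1-q) ^ (α * p) * (1-q) := by
        rw [← Real.rpow_add hG]
        have : (α-1)*p + (p+1) = α * p + 1 := by ring
        rw [this, Real.rpow_add hG, Real.rpow_one]; ring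
  _ = (X * (1-q) ^ α) ^ p * (1-q) := by
        rw [Real.mul_rpow hX0.le (by positivity), Real.rpow_mul hG.le]
  _ = _ := by rw [e1]

end lemmas

theorem q_riemann_liouville (q p α : ℝ) (hq : 0 < q) (hq1 : q < 1) (hp : 1 < p)
    (hα : 0 < α) (f : ℝ → ℝ≥0∞) :
    ENNReal.ofReal ((1 - q) ^ (p + 1) / (qGamma q α) ^ p) *
        ∑' j : ℤ, (ENNReal.ofReal q) ^ ((j : ℝ) * (1 - p)) *
          (∑' m : ℕ, ENNReal.ofReal (qPoch (q ^ ((m : ℝ) + 1)) q (α - 1)) *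
            f (q ^ ((j : ℝ) + (m : ℝ))) * (ENNReal.ofReal q) ^ ((j : ℝ) + (m : ℝ))) ^ p
      ≤ ENNReal.ofReal ((qGamma q (1 - 1 / p) / qGamma q (α + 1 - 1 / p)) ^ p * (1 - q)) *
        ∑' i : ℤ, (ENNReal.ofReal q) ^ (i : ℝ) * (f (q ^ (i : ℝ))) ^ p := by
  have hG : (0:ℝ) < 1 - q := by linarith
  have hp0 : (0:ℝ) < p := by linarith
  have hs0 : 0 < 1 - 1/p := by
    have : 1/p < 1 := by rw [div_lt_one hp0]; exact hp
    linarith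
  have hs1 : 1 - 1/p < 1 := by
    have : 0 < 1/p := by positivity
    linarith
  set Q := ENNReal.ofReal q with hQ
  have hQ0 : Q ≠ 0 := (ENNReal.ofReal_pos.mpr hq).ne'
  have hQt : Q ≠ ⊤ := ENNReal.ofReal_ne_top
  set A := q ^ α with hA
  set Z := q ^ (1 - 1/p) with hZ
  have hA0 : 0 < A := Real.rpow_pos_of_pos hq α
  have hA1 : A < 1 := Real.rpow_lt_one hq.le hq1 hα
  have hZ0 : 0 < Z := Real.rpow_pos_of_pos hq _
  have hZ1 : Z < 1 := Real.rpow_lt_one hq.le hq1 hs0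
  have hAZ0 : 0 ≤ A * Z := by positivity
  have hAZ1 : A * Z < 1 := lt_of_le_of_lt (mul_le_of_le_one_left hZ0.le hA1.le) hZ1
  have hPq := qPochInf_pos hq hq1 hq.le hq1
  have hPA := qPochInf_pos hq hq1 hA0.le hA1
  have hPZ := qPochInf_pos hq hq1 hZ0.le hZ1
  have hPAZ := qPochInf_pos hq hq1 hAZ0 hAZ1
  -- the coefficients
  have hc_eq : ∀ m : ℕ, qPoch (q ^ ((m : ℝ) + 1)) q (α - 1)
      = qbc q A m * (qPochInf q q / qPochInf A q) := by
    intro m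
    have hDm : 0 < ∏ i ∈ range m, (1 - q * q ^ i) :=
      Finset.prod_pos fun i _ => factor_pos hq hq1 hq.le hq1 i
    have hNm : 0 < ∏ i ∈ range m, (1 - A * q ^ i) :=
      Finset.prod_pos fun i _ => factor_pos hq hq1 hA0.le hA1 i
    have harg2 : q ^ ((m:ℝ)+1) * q ^ (α-1) = A * q ^ m := by
      rw [← Real.rpow_natCast q m, hA, ← Real.rpow_add hq, ← Real.rpow_add hq]
      ring_nf
    have harg1 : q ^ ((m:ℝ)+1) = q * q ^ m := by
      rw [Real.rpow_add hq, Real.rpow_one, Real.rpow_natCast]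
      ring
    rw [qPoch, harg2, harg1]
    have h1 : qPochInf (q * q ^ m) q = qPochInf q q / ∏ i ∈ range m, (1 - q * q ^ i) := by
      rw [eq_div_iff hDm.ne']
      rw [qPochInf_split hq hq1 hq.le hq1 m]
      ring
    have h2 : qPochInf (A * q ^ m) q = qPochInf A q / ∏ i ∈ range m, (1 - A * q ^ i) := by
      rw [eq_div_iff hNm.ne']
      rw [qPochInf_split hq hq1 hA0.le hA1 m]
      ring
    rw [h1, h2, qbc]
    field_simp
  have hc_nonneg : ∀ m : ℕ, 0 ≤ qPoch (q ^ ((m : ℝ) + 1)) q (α - 1) := by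
    intro m
    rw [hc_eq m]
    have := qbc_nonneg hq hq1 hA0.le hA1 m
    positivity
  -- the real-valued sum
  have hsummable : Summable (fun m : ℕ => qPoch (q ^ ((m : ℝ) + 1)) q (α - 1) * Z ^ m) := by
    apply Summable.congr ((qbc_summable hq hq1 hA0.le hA1 hZ0.le hZ1).mul_left
      (qPochInf q q / qPochInf A q))
    intro m
    rw [hc_eq m]
    ring
  have hsum_c : ∑' m : ℕ, qPoch (q ^ ((m : ℝ) + 1)) q (α - 1) * Z ^ m
      = (qPochInf q q / qPochInf A q) * (qPochInf (A * Z) q / qPochInf Z q) := by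
    rw [← qbinomial hq hq1 hA0.le hA1 hZ0.le hZ1, ← tsum_mul_left]
    exact tsum_congr fun m => by rw [hc_eq m]; ring
  -- ENNReal side
  set a : ℕ → ℝ≥0∞ := fun m =>
    ENNReal.ofReal (qPoch (q ^ ((m : ℝ) + 1)) q (α - 1)) * Q ^ ((m:ℝ) * (1 - 1/p)) with ha
  set u : ℤ → ℝ≥0∞ := fun i => Q ^ ((i:ℝ)/p) * f (q ^ (i:ℝ)) with hu
  have hu_pow : ∀ i : ℤ, u i ^ p = Q ^ ((i:ℝ)) * f (q ^ (i:ℝ)) ^ p := by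
    intro i
    simp only [hu]
    rw [ENNReal.mul_rpow_of_nonneg _ _ hp0.le, ← ENNReal.rpow_mul, div_mul_cancel₀ _ hp0.ne']
  have hterm : ∀ j : ℤ, Q ^ ((j:ℝ) * (1 - p)) *
      (∑' m : ℕ, ENNReal.ofReal (qPoch (q ^ ((m : ℝ) + 1)) q (α - 1)) *
        f (q ^ ((j : ℝ) + (m : ℝ))) * Q ^ ((j : ℝ) + (m : ℝ))) ^ p
      = (∑' m : ℕ, a m * u (j + (m:ℤ))) ^ p := by
    intro j
    have h1 : Q ^ ((j:ℝ)*(1-p)) = (Q ^ ((j:ℝ)*(1-p)/p)) ^ p := by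
      rw [← ENNReal.rpow_mul, div_mul_cancel₀ _ hp0.ne']
    rw [h1, ← ENNReal.mul_rpow_of_nonneg _ _ hp0.le]
    congr 1
    rw [← ENNReal.tsum_mul_left]
    apply tsum_congr
    intro m
    have hcast : (((j + (m:ℤ)) : ℤ):ℝ) = (j:ℝ) + (m:ℝ) := by push_cast; ring
    simp only [ha, hu, hcast]
    have hexp : (j:ℝ)*(1-p)/p + ((j:ℝ)+(m:ℝ)) = (m:ℝ)*(1-1/p) + ((j:ℝ)+(m:ℝ))/p := by
      field_simp
      ring
    calc Q ^ ((j:ℝ)*(1-p)/p) *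
        (ENNReal.ofReal (qPoch (q ^ ((m : ℝ) + 1)) q (α - 1)) * f (q ^ ((j:ℝ)+(m:ℝ))) *
          Q ^ ((j:ℝ)+(m:ℝ)))
        = ENNReal.ofReal (qPoch (q ^ ((m : ℝ) + 1)) q (α - 1)) * f (q ^ ((j:ℝ)+(m:ℝ))) *
          (Q ^ ((j:ℝ)*(1-p)/p) * Q ^ ((j:ℝ)+(m:ℝ))) := by ring
    _ = ENNReal.ofReal (qPoch (q ^ ((m : ℝ) + 1)) q (α - 1)) * f (q ^ ((j:ℝ)+(m:ℝ))) *
          Q ^ ((j:ℝ)*(1-p)/p + ((j:ℝ)+(m:ℝ))) := by rw [← ENNReal.rpow_add _ _ hQ0 hQt]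
    _ = ENNReal.ofReal (qPoch (q ^ ((m : ℝ) + 1)) q (α - 1)) * f (q ^ ((j:ℝ)+(m:ℝ))) *
          Q ^ ((m:ℝ)*(1-1/p) + ((j:ℝ)+(m:ℝ))/p) := by rw [hexp]
    _ = _ := by rw [ENNReal.rpow_add _ _ hQ0 hQt]; ring
  -- sum of a
  have hB0 : (0:ℝ) < (qPochInf q q / qPochInf A q) * (qPochInf (A*Z) q / qPochInf Z q) := by
    positivity
  have hsum_a : ∑' m, a m = ENNReal.ofReal
      ((qPochInf q q / qPochInf A q) * (qPochInf (A*Z) q / qPochInf Z q)) := by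
    rw [← hsum_c, ENNReal.ofReal_tsum_of_nonneg
      (fun m => mul_nonneg (hc_nonneg m) (by positivity)) hsummable]
    apply tsum_congr
    intro m
    simp only [ha]
    have hZm : q ^ ((m:ℝ)*(1-1/p)) = Z ^ m := by
      rw [mul_comm, Real.rpow_mul hq.le, ← hZ, Real.rpow_natCast]
    rw [hQ, ENNReal.ofReal_rpow_of_pos hq, hZm, ← ENNReal.ofReal_mul (hc_nonneg m)]
  -- gamma function values
  have hGαdef : qGamma q α = qPochInf q q * (1-q) ^ (1-α) / qPochInf A q := by
    rw [qGamma, hA]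
  have hGsdef : qGamma q (1 - 1/p) = qPochInf q q * (1-q) ^ (1-(1-1/p)) / qPochInf Z q := by
    rw [qGamma, hZ]
  have hGasdef : qGamma q (α + 1 - 1/p)
      = qPochInf q q * (1-q) ^ (1-(α+1-1/p)) / qPochInf (A*Z) q := by
    have hqe : q ^ (α + 1 - 1/p) = q ^ α * q ^ (1-1/p) := by
      rw [← Real.rpow_add hq]; ring_nf
    rw [qGamma, hA, hZ, hqe]
  have hGammaPos : 0 < qGamma q α := by rw [hGαdef]; positivity
  have hCL0 : (0:ℝ) ≤ (1 - q) ^ (p + 1) / (qGamma q α) ^ p := by positivity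
  -- main chain
  calc ENNReal.ofReal ((1 - q) ^ (p + 1) / (qGamma q α) ^ p) *
        ∑' j : ℤ, Q ^ ((j : ℝ) * (1 - p)) *
          (∑' m : ℕ, ENNReal.ofReal (qPoch (q ^ ((m : ℝ) + 1)) q (α - 1)) *
            f (q ^ ((j : ℝ) + (m : ℝ))) * Q ^ ((j : ℝ) + (m : ℝ))) ^ p
      = ENNReal.ofReal ((1 - q) ^ (p + 1) / (qGamma q α) ^ p) *
        ∑' j : ℤ, (∑' m : ℕ, a m * u (j + (m:ℤ))) ^ p := by
        congr 1
        exact tsum_congr hterm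
  _ ≤ ENNReal.ofReal ((1 - q) ^ (p + 1) / (qGamma q α) ^ p) *
        ((∑' m, a m) ^ p * ∑' i : ℤ, u i ^ p) :=
        mul_le_mul_right (young_conv hp a u) _
  _ = ENNReal.ofReal ((qGamma q (1 - 1 / p) / qGamma q (α + 1 - 1 / p)) ^ p * (1 - q)) *
        ∑' i : ℤ, Q ^ (i : ℝ) * (f (q ^ (i : ℝ))) ^ p := by
        rw [← mul_assoc, hsum_a, ENNReal.ofReal_rpow_of_pos hB0,
          ← ENNReal.ofReal_mul hCL0,
          const_identity q p α hq hq1 hp hα _ _ _ _ hPq hPA hPZ hPAZ hGαdef hGsdef hGasdef]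
        congr 1
        exact tsum_congr hu_pow
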